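/- arXiv:2306.08694 — 2 statements merged into one kernel-verified Lean document; each statement's English description precedes it below -/
import Mathlib

section
/- (Remark after Proposition 5.1: d_Δ is a pseudo-distance.) Assume E ⊆ ℂ^d is open, every entry of Δ is holomorphic on E, and B_Δ is a nonempty connected open set. Then d_Δ is a pseudo-distance on B_Δ: for all z_1, z_2, z_3 ∈ B_Δ one has d_Δ(z_1, z_1) = 0, d_Δ(z_1, z_2) = d_Δ(z_2, z_1), and d_Δ(z_1, z_3) ≤ d_Δ(z_1, z_2) + d_Δ(z_2, z_3). -/
open scoped Matrix.Norms.L2Operator ComplexOrder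
open Matrix

noncomputable section

open scoped Classical in
/-- Square root of a positive semidefinite matrix (junk value `0` otherwise). -/
def msqrt {n' : Type*} [Fintype n'] [DecidableEq n'] (M : Matrix n' n' ℂ) : Matrix n' n' ℂ :=
  if h : M.PosSemidef then (h.1.eigenvectorUnitary : Matrix n' n' ℂ) *
    diagonal ((↑) ∘ Real.sqrt ∘ h.1.eigenvalues) * (star (h.1.eigenvectorUnitary : Matrix n' n' ℂ))
  else 0

/-- The pseudo-distance `d_Δ`. -/
def dDelta {α m' n' : Type*} [Fintype m'] [Fintype n'] [DecidableEq m'] [DecidableEq n']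
    (Δ : α → Matrix m' n' ℂ) (z w : α) : ℝ :=
  ‖(msqrt (1 - Δ w * (Δ w)ᴴ))⁻¹ * ((Δ z - Δ w) *
      ((1 - (Δ w)ᴴ * Δ z)⁻¹ * msqrt (1 - (Δ w)ᴴ * Δ w)))‖

/-- `B_Δ = {z ∈ E : ‖Δ(z)‖ < 1}`. -/
def BDelta {α m' n' : Type*} [Fintype m'] [Fintype n'] [DecidableEq n'] (E : Set α)
    (Δ : α → Matrix m' n' ℂ) : Set α :=
  {z | z ∈ E ∧ ‖Δ z‖ < 1}

/-- pseudo-hyperbolic distance on the unit disk -/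
def dDisk (a b : ℂ) : ℝ := ‖a - b‖ / ‖1 - (starRingEnd ℂ) b * a‖

/-- elementary tensor `ξ ⊗ v` in `ℂ^m ⊗ ℂ^2`, realized as a function on `m × Fin 2` -/
def tpr {m' : Type*} (ξ : m' → ℂ) (v : Fin 2 → ℂ) : m' × Fin 2 → ℂ :=
  fun p => ξ p.1 * v p.2

/-- inner product, conjugate-linear in the second variable -/
def herm {m' : Type*} [Fintype m'] (ξ η : m' → ℂ) : ℂ :=
  ∑ p, ξ p * (starRingEnd ℂ) (η p)

/-- positive semidefiniteness of a `2 × 2` kernel `(a i j)` -/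
def PSD2 (a : Fin 2 → Fin 2 → ℂ) : Prop :=
  ∀ c : Fin 2 → ℂ, 0 ≤ ∑ i, ∑ j, a i j * c i * (starRingEnd ℂ) (c j)

/-- `T` is a generic tuple with joint eigenvectors `v` and joint eigenvalues `z 0 ≠ z 1`. -/
def IsGenericTuple {d : ℕ} (T : Fin d → Matrix (Fin 2) (Fin 2) ℂ)
    (v : Fin 2 → Fin 2 → ℂ) (z : Fin 2 → Fin d → ℂ) : Prop :=
  LinearIndependent ℂ v ∧ z 0 ≠ z 1 ∧ ∀ i j, T i *ᵥ v j = z j i • v j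

/-- `‖Δ(T)‖ ≤ 1`, where `Δ(T)` is the matrix on `ℂ^s ⊗ ℂ^2` determined by
`Δ(T)(e_i ⊗ v_j) = (Δ(z_j) e_i) ⊗ v_j`. -/
def DeltaTContract {β : Type*} {s r : ℕ} (Δ : β → Matrix (Fin s) (Fin r) ℂ)
    (v : Fin 2 → Fin 2 → ℂ) (z : Fin 2 → β) : Prop :=
  ∀ DT : Matrix (Fin s × Fin 2) (Fin r × Fin 2) ℂ,
    (∀ (i : Fin r) (j : Fin 2),
      DT *ᵥ tpr (Pi.single i 1) (v j) = tpr (Δ (z j) *ᵥ Pi.single i 1) (v j)) →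
    ‖DT‖ ≤ 1

/-- membership in the class `S_{2,gen}(B_Δ)` -/
def MemS2gen {d s r : ℕ} (E : Set (Fin d → ℂ)) (Δ : (Fin d → ℂ) → Matrix (Fin s) (Fin r) ℂ)
    (f : (Fin d → ℂ) → ℂ) : Prop :=
  ∀ (T : Fin d → Matrix (Fin 2) (Fin 2) ℂ) (v : Fin 2 → Fin 2 → ℂ) (z : Fin 2 → Fin d → ℂ),
    IsGenericTuple T v z → (∀ j, z j ∈ BDelta E Δ) → DeltaTContract Δ v z →
    ∀ fT : Matrix (Fin 2) (Fin 2) ℂ, (∀ j, fT *ᵥ v j = f (z j) • v j) → ‖fT‖ ≤ 1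

/-- the Möbius pseudo-distance of a domain `Ω` -/
def dMobius {α : Type*} [NormedAddCommGroup α] [NormedSpace ℂ α] (Ω : Set α) (z w : α) : ℝ :=
  sSup {x | ∃ g : α → ℂ, DifferentiableOn ℂ g Ω ∧ (∀ ζ ∈ Ω, ‖g ζ‖ < 1) ∧ x = dDisk (g z) (g w)}

/-- `Ω` is a complete spectral domain for the diagonalizable tuple with eigenvectors `v` and
joint eigenvalues `z 0, z 1`. -/
def IsCompleteSpectralDomainFor {α : Type*} [NormedAddCommGroup α] [NormedSpace ℂ α]
    (Ω : Set α) (v : Fin 2 → Fin 2 → ℂ) (z : Fin 2 → α) : Prop :=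
  ∀ (n : ℕ) (F : α → Matrix (Fin n) (Fin n) ℂ),
    (∀ i j, DifferentiableOn ℂ (fun ζ => F ζ i j) Ω) →
    ∀ C : ℝ, (∀ ζ ∈ Ω, ‖F ζ‖ ≤ C) →
    ∀ FT : Matrix (Fin n × Fin 2) (Fin n × Fin 2) ℂ,
      (∀ (ξ : Fin n → ℂ) (j : Fin 2), FT *ᵥ tpr ξ (v j) = tpr (F (z j) *ᵥ ξ) (v j)) →
      ‖FT‖ ≤ C

set_option linter.unusedSectionVars false

namespace DDeltaAux

variable {m n : Type*} [Fintype m] [Fintype n] [DecidableEq m] [DecidableEq n]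

def en (v : n → ℂ) : ℝ := ‖(WithLp.equiv 2 (n → ℂ)).symm v‖

lemma en_nonneg (v : n → ℂ) : 0 ≤ en v := norm_nonneg _

lemma en_pos {v : n → ℂ} (hv : v ≠ 0) : 0 < en v := by
  rw [en, norm_pos_iff]; simpa using hv

lemma dot_self (v : n → ℂ) : star v ⬝ᵥ v = ((en v) ^ 2 : ℝ) := by
  have h : inner ℂ ((WithLp.equiv 2 (n → ℂ)).symm v) ((WithLp.equiv 2 (n → ℂ)).symm v)
      = star v ⬝ᵥ v := (EuclideanSpace.inner_toLp_toLp v v).trans (dotProduct_comm _ _)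
  rw [inner_self_eq_norm_sq_to_K] at h
  rw [← h, en]; norm_cast

lemma abs_dot_le (v w : n → ℂ) : ‖star v ⬝ᵥ w‖ ≤ en v * en w := by
  have h : inner ℂ ((WithLp.equiv 2 (n → ℂ)).symm v) ((WithLp.equiv 2 (n → ℂ)).symm w)
      = star v ⬝ᵥ w := (EuclideanSpace.inner_toLp_toLp v w).trans (dotProduct_comm _ _)
  have := norm_inner_le_norm (𝕜 := ℂ) ((WithLp.equiv 2 (n → ℂ)).symm v)
    ((WithLp.equiv 2 (n → ℂ)).symm w)
  rw [h] at this
  simpa [en] using this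

lemma en_mulVec_le (X : Matrix m n ℂ) (v : n → ℂ) : en (X *ᵥ v) ≤ ‖X‖ * en v := by
  simpa [en] using X.l2_opNorm_mulVec ((WithLp.equiv 2 (n → ℂ)).symm v)

lemma opNorm_le_of_bound (X : Matrix m n ℂ) {t : ℝ} (ht : 0 ≤ t)
    (h : ∀ v : n → ℂ, en (X *ᵥ v) ≤ t * en v) : ‖X‖ ≤ t := by
  rw [Matrix.l2_opNorm_def]
  exact ContinuousLinearMap.opNorm_le_bound _ ht fun x => h x.ofLp

lemma dot_hermquad (X Y : Matrix m n ℂ) (v w : n → ℂ) :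
    star v ⬝ᵥ ((Xᴴ * Y) *ᵥ w) = star (X *ᵥ v) ⬝ᵥ (Y *ᵥ w) := by
  rw [← Matrix.mulVec_mulVec, Matrix.dotProduct_mulVec, Matrix.star_mulVec]

lemma quad_one_sub (X Y : Matrix m n ℂ) (c : ℂ) (v w : n → ℂ) :
    star v ⬝ᵥ ((c • (1 - Xᴴ * Y)) *ᵥ w) = c * (star v ⬝ᵥ w - star (X *ᵥ v) ⬝ᵥ (Y *ᵥ w)) := by
  rw [Matrix.smul_mulVec, dotProduct_smul, Matrix.sub_mulVec,
    dotProduct_sub, Matrix.one_mulVec, dot_hermquad]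
  simp

lemma psd_iff_norm_le (X : Matrix m n ℂ) {t : ℝ} (ht : 0 ≤ t) :
    (((t : ℂ) ^ 2 • 1 - Xᴴ * X)).PosSemidef ↔ ‖X‖ ≤ t := by
  have key : ∀ v : n → ℂ, star v ⬝ᵥ (((t : ℂ) ^ 2 • 1 - Xᴴ * X) *ᵥ v)
      = ((t ^ 2 * (en v) ^ 2 - (en (X *ᵥ v)) ^ 2 : ℝ) : ℂ) := by
    intro v
    rw [Matrix.sub_mulVec, dotProduct_sub, Matrix.smul_mulVec,
      dotProduct_smul, Matrix.one_mulVec, dot_hermquad, dot_self, dot_self,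
      smul_eq_mul]
    push_cast; ring
  constructor
  · intro h
    refine opNorm_le_of_bound X ht fun v => ?_
    have h2 := h.dotProduct_mulVec_nonneg v
    rw [key v, Complex.zero_le_real] at h2
    have h3 : (en (X *ᵥ v)) ^ 2 ≤ (t * en v) ^ 2 := by nlinarith
    calc en (X *ᵥ v) = Real.sqrt ((en (X *ᵥ v)) ^ 2) := (Real.sqrt_sq (en_nonneg _)).symm
      _ ≤ Real.sqrt ((t * en v) ^ 2) := Real.sqrt_le_sqrt h3
      _ = t * en v := Real.sqrt_sq (mul_nonneg ht (en_nonneg _))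
  · intro h
    refine Matrix.PosSemidef.of_dotProduct_mulVec_nonneg ?_ ?_
    · unfold Matrix.IsHermitian
      simp [Matrix.conjTranspose_smul, Matrix.conjTranspose_sub, Matrix.conjTranspose_mul,
        ← Complex.ofReal_pow]
    · intro v
      rw [key v, Complex.zero_le_real]
      have h1 : en (X *ᵥ v) ≤ t * en v :=
        le_trans (en_mulVec_le X v) (by nlinarith [en_nonneg v])
      nlinarith [en_nonneg (X *ᵥ v), en_nonneg v]

lemma posDef_one_sub (X : Matrix m n ℂ) (h : ‖X‖ < 1) : (1 - Xᴴ * X).PosDef := by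
  have key : ∀ v : n → ℂ, star v ⬝ᵥ ((1 - Xᴴ * X) *ᵥ v)
      = (((en v) ^ 2 - (en (X *ᵥ v)) ^ 2 : ℝ) : ℂ) := by
    intro v
    rw [Matrix.sub_mulVec, dotProduct_sub, Matrix.one_mulVec, dot_hermquad,
      dot_self, dot_self]
    push_cast; ring
  refine Matrix.PosDef.of_dotProduct_mulVec_pos ?_ ?_
  · unfold Matrix.IsHermitian
    simp [Matrix.conjTranspose_sub, Matrix.conjTranspose_mul]
  · intro v hv
    rw [key v, Complex.zero_lt_real]
    have h1 : en (X *ᵥ v) ≤ ‖X‖ * en v := en_mulVec_le X v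
    have h2 : 0 < en v := en_pos hv
    nlinarith [en_nonneg (X *ᵥ v), norm_nonneg X, mul_lt_mul_of_pos_right h h2]

lemma posDef_one_sub' (X : Matrix m n ℂ) (h : ‖X‖ < 1) : (1 - X * Xᴴ).PosDef := by
  have := posDef_one_sub Xᴴ (by rwa [Matrix.l2_opNorm_conjTranspose])
  rwa [Matrix.conjTranspose_conjTranspose] at this


section MsqrtFacts

lemma msqrt_mul_self {M : Matrix n n ℂ} (h : M.PosSemidef) : msqrt M * msqrt M = M := by
  rw [msqrt, dif_pos h]
  set U : Matrix n n ℂ := (h.1.eigenvectorUnitary : Matrix n n ℂ) with hU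
  set D : Matrix n n ℂ := diagonal ((↑) ∘ Real.sqrt ∘ h.1.eigenvalues) with hDdef
  have hUU : star U * U = 1 := Unitary.coe_star_mul_self _
  have hD : D * D = diagonal (RCLike.ofReal ∘ h.1.eigenvalues : n → ℂ) := by
    rw [hDdef, diagonal_mul_diagonal]; congr 1; funext i
    simp only [Function.comp_apply]
    rw [← Complex.ofReal_mul, Real.mul_self_sqrt (h.eigenvalues_nonneg i)]; rfl
  conv_rhs => rw [h.1.spectral_theorem]
  rw [Unitary.conjStarAlgAut_apply]
  calc U * D * star U * (U * D * star U) = U * (D * (star U * U) * D) * star U := by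
        simp only [Matrix.mul_assoc]
    _ = _ := by rw [hUU, Matrix.mul_one, hD]

lemma msqrt_herm {M : Matrix n n ℂ} (h : M.PosSemidef) : (msqrt M)ᴴ = msqrt M := by
  rw [msqrt, dif_pos h]
  simp [Matrix.conjTranspose_mul, ← Matrix.star_eq_conjTranspose, Matrix.mul_assoc,
    Matrix.star_eq_conjTranspose, Matrix.diagonal_conjTranspose]
  congr 3; funext i; simp

lemma msqrt_det_isUnit {M : Matrix n n ℂ} (h : M.PosDef) : IsUnit (msqrt M).det := by
  rw [isUnit_iff_ne_zero]
  intro h0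
  have : (msqrt M * msqrt M).det = 0 := by rw [Matrix.det_mul, h0, mul_zero]
  rw [msqrt_mul_self h.posSemidef] at this
  exact h.det_pos.ne' this

lemma inv_herm {M : Matrix n n ℂ} (h : Mᴴ = M) : (M⁻¹)ᴴ = M⁻¹ := by
  rw [Matrix.conjTranspose_nonsing_inv, h]

lemma msqrt_inv_herm {M : Matrix n n ℂ} (h : M.PosSemidef) : ((msqrt M)⁻¹)ᴴ = (msqrt M)⁻¹ :=
  inv_herm (msqrt_herm h)

lemma msqrt_inv_mul_inv {M : Matrix n n ℂ} (h : M.PosSemidef) :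
    (msqrt M)⁻¹ * (msqrt M)⁻¹ = M⁻¹ := by
  rw [← Matrix.mul_inv_rev, msqrt_mul_self h]

lemma isUnit_det_one_sub {Z : Matrix n n ℂ} (h : ‖Z‖ < 1) : IsUnit (1 - Z).det := by
  rw [isUnit_iff_ne_zero]
  intro h0
  obtain ⟨v, hv, hZv⟩ := (Matrix.exists_mulVec_eq_zero_iff).2 h0
  have hveq : v = Z *ᵥ v := by
    have := hZv
    rw [Matrix.sub_mulVec, Matrix.one_mulVec, sub_eq_zero] at this
    exact this
  have h1 : en (Z *ᵥ v) ≤ ‖Z‖ * en v := en_mulVec_le Z v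
  rw [← hveq] at h1
  have h2 : 0 < en v := en_pos hv
  nlinarith

lemma psd_conj_iff {Z W : Matrix n n ℂ} (hW : IsUnit W.det) :
    (Wᴴ * Z * W).PosSemidef ↔ Z.PosSemidef := by
  constructor
  · intro h
    have h2 := h.conjTranspose_mul_mul_same W⁻¹
    have e1 : (W⁻¹)ᴴ * (Wᴴ * Z * W) * W⁻¹ = Z := by
      rw [Matrix.conjTranspose_nonsing_inv]
      calc (Wᴴ)⁻¹ * (Wᴴ * Z * W) * W⁻¹
          = (Wᴴ)⁻¹ * Wᴴ * Z * (W * W⁻¹) := by noncomm_ring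
        _ = Z := by
            rw [Matrix.nonsing_inv_mul _ (by rwa [Matrix.det_conjTranspose, isUnit_iff_ne_zero,
              ne_eq, star_eq_zero, ← ne_eq, ← isUnit_iff_ne_zero]),
              Matrix.mul_nonsing_inv _ hW]
            simp
    rwa [e1] at h2
  · intro h
    exact h.conjTranspose_mul_mul_same W

lemma expand_mid (D : Matrix n m ℂ) (E B : Matrix m n ℂ) (Q' : Matrix n n ℂ) :
    D * (1 + B * Q' * Bᴴ) * E = D * E + (D * B) * Q' * (Bᴴ * E) := by
  simp only [Matrix.mul_add, Matrix.add_mul, Matrix.sub_mul, Matrix.mul_sub,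
    Matrix.one_mul, Matrix.mul_one, Matrix.mul_assoc]

lemma aux4 (Q U V Q' : Matrix n n ℂ) (h1 : Q * Q' = 1) (h2 : Q' * Q = 1) :
    (Q - U) * Q' * (Q - V) = Q - V - U + U * Q' * V := by
  have e : (Q - U) * Q' * (Q - V) = Q * Q' * Q - Q * Q' * V - U * (Q' * Q) + U * Q' * V := by
    noncomm_ring
  rw [e, h1, h2]
  noncomm_ring

/-- The fundamental algebraic ("polarized") identity. -/
lemma star_pol (A C B : Matrix m n ℂ) (hB : ‖B‖ < 1) :
    (1 - Aᴴ * B) * (1 - Bᴴ * B)⁻¹ * (1 - Bᴴ * C) - (Aᴴ - Bᴴ) * (1 - B * Bᴴ)⁻¹ * (C - B)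
      = 1 - Aᴴ * C := by
  set Q : Matrix n n ℂ := 1 - Bᴴ * B with hQdef
  set P : Matrix m m ℂ := 1 - B * Bᴴ with hPdef
  have hQpd : Q.PosDef := posDef_one_sub B hB
  have hQu : IsUnit Q.det := (Matrix.isUnit_iff_isUnit_det Q).mp hQpd.isUnit
  have hQQ : Q * Q⁻¹ = 1 := Matrix.mul_nonsing_inv _ hQu
  have hQQ' : Q⁻¹ * Q = 1 := Matrix.nonsing_inv_mul _ hQu
  have hPinv : P⁻¹ = 1 + B * Q⁻¹ * Bᴴ := by
    have e1 : P * (1 + B * Q⁻¹ * Bᴴ) = 1 - B * Bᴴ + B * ((Q * Q⁻¹) * Bᴴ) := by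
      rw [hPdef, hQdef]
      simp only [Matrix.mul_add, Matrix.add_mul, Matrix.sub_mul, Matrix.mul_sub,
        Matrix.one_mul, Matrix.mul_one, Matrix.mul_assoc]
    rw [hQQ, Matrix.one_mul] at e1
    have e2 : P * (1 + B * Q⁻¹ * Bᴴ) = 1 := by rw [e1]; abel
    exact Matrix.inv_eq_right_inv e2
  have h2 : (Aᴴ - Bᴴ) * B = Q - (1 - Aᴴ * B) := by
    rw [hQdef]
    simp only [Matrix.sub_mul]
    abel
  have h3 : Bᴴ * (C - B) = Q - (1 - Bᴴ * C) := by
    rw [hQdef]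
    simp only [Matrix.mul_sub]
    abel
  have h5 : (Aᴴ - Bᴴ) * (C - B)
      = (1 - Aᴴ * B) + (1 - Bᴴ * C) - Q - 1 + Aᴴ * C := by
    rw [hQdef]
    simp only [Matrix.sub_mul, Matrix.mul_sub]
    abel
  rw [hPinv, expand_mid, h2, h3, aux4 Q (1 - Aᴴ * B) (1 - Bᴴ * C) Q⁻¹ hQQ hQQ', h5]
  abel

end MsqrtFacts

section Kmat

/-- The `2×2`-block Pick matrix. -/
def Kmat (A B : Matrix m n ℂ) (c : ℝ) : Matrix (n ⊕ n) (n ⊕ n) ℂ :=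
  Matrix.fromBlocks (1 - Aᴴ * A) ((c : ℂ) • (1 - Aᴴ * B)) ((c : ℂ) • (1 - Bᴴ * A)) (1 - Bᴴ * B)

lemma quad_one_sub' (X Y : Matrix m n ℂ) (v w : n → ℂ) :
    star v ⬝ᵥ ((1 - Xᴴ * Y) *ᵥ w) = star v ⬝ᵥ w - star (X *ᵥ v) ⬝ᵥ (Y *ᵥ w) := by
  rw [Matrix.sub_mulVec, dotProduct_sub, Matrix.one_mulVec, dot_hermquad]

lemma Kmat_herm (A B : Matrix m n ℂ) (c : ℝ) : (Kmat A B c).IsHermitian := by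
  unfold Matrix.IsHermitian Kmat
  rw [Matrix.fromBlocks_conjTranspose]
  simp [Matrix.conjTranspose_smul, Matrix.conjTranspose_sub, Matrix.conjTranspose_mul,
    Complex.star_def, Complex.conj_ofReal]

lemma Kmat_swap {A B : Matrix m n ℂ} {c : ℝ} (h : (Kmat A B c).PosSemidef) :
    (Kmat B A c).PosSemidef := by
  have h2 := h.submatrix (Sum.swap : n ⊕ n → n ⊕ n)
  unfold Kmat at h2 ⊢
  rwa [Matrix.fromBlocks_submatrix_sum_swap_sum_swap] at h2

lemma Kmat_psd (A B : Matrix m n ℂ) {t u c : ℝ}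
    (hA : ‖A‖ ≤ t) (hB : ‖B‖ ≤ u) (ht : 0 ≤ t) (ht1 : t ≤ 1) (hu : 0 ≤ u) (hu1 : u ≤ 1)
    (hc : 0 ≤ c) (hcle : c * (1 + t * u) ≤ Real.sqrt (1 - t ^ 2) * Real.sqrt (1 - u ^ 2)) :
    (Kmat A B c).PosSemidef := by
  refine Matrix.PosSemidef.of_dotProduct_mulVec_nonneg (Kmat_herm A B c) fun x => ?_
  set ξ : n → ℂ := x ∘ Sum.inl with hξ
  set η : n → ℂ := x ∘ Sum.inr with hη
  have hx : x = Sum.elim ξ η := by funext i; cases i <;> rfl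
  have hsx : star (Sum.elim ξ η) = Sum.elim (star ξ) (star η) := by
    funext i; cases i <;> rfl
  rw [hx, hsx, Kmat, Matrix.fromBlocks_mulVec, sumElim_dotProduct_sumElim,
    dotProduct_add, dotProduct_add]
  simp only [Sum.elim_comp_inl, Sum.elim_comp_inr]
  rw [quad_one_sub', quad_one_sub', quad_one_sub (c := (c : ℂ)), quad_one_sub (c := (c : ℂ))]
  set z : ℂ := star ξ ⬝ᵥ η - star (A *ᵥ ξ) ⬝ᵥ (B *ᵥ η) with hz
  have hzswap : star η ⬝ᵥ ξ - star (B *ᵥ η) ⬝ᵥ (A *ᵥ ξ) = starRingEnd ℂ z := by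
    rw [hz, map_sub]
    congr 1
    · rw [Matrix.star_dotProduct]; rfl
    · rw [Matrix.star_dotProduct]; rfl
  rw [hzswap, dot_self, dot_self, dot_self, dot_self]
  have key : (((en ξ) ^ 2 : ℝ) : ℂ) - ((en (A *ᵥ ξ)) ^ 2 : ℝ) + (c : ℂ) * z
      + ((c : ℂ) * (starRingEnd ℂ z) + ((((en η) ^ 2 : ℝ) : ℂ) - ((en (B *ᵥ η)) ^ 2 : ℝ)))
      = (((en ξ) ^ 2 - (en (A *ᵥ ξ)) ^ 2 + ((en η) ^ 2 - (en (B *ᵥ η)) ^ 2)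
          + c * (2 * z.re) : ℝ) : ℂ) := by
    have hcj : z + starRingEnd ℂ z = 2 * (z.re : ℂ) := by
      rw [Complex.add_conj]; push_cast; try ring
    push_cast
    linear_combination (c : ℂ) * hcj
  rw [key, Complex.zero_le_real]
  -- now a purely real inequality
  have hAb : en (A *ᵥ ξ) ≤ t * en ξ :=
    le_trans (en_mulVec_le A ξ) (mul_le_mul_of_nonneg_right hA (en_nonneg _))
  have hBb : en (B *ᵥ η) ≤ u * en η :=
    le_trans (en_mulVec_le B η) (mul_le_mul_of_nonneg_right hB (en_nonneg _))
  have habs : |z.re| ≤ en ξ * en η + en (A *ᵥ ξ) * en (B *ᵥ η) := by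
    have h1 : |z.re| ≤ ‖z‖ := Complex.abs_re_le_norm z
    have h2 : ‖z‖ ≤ ‖star ξ ⬝ᵥ η‖
        + ‖star (A *ᵥ ξ) ⬝ᵥ (B *ᵥ η)‖ := by
      simpa [hz, sub_eq_add_neg] using
        norm_add_le (star ξ ⬝ᵥ η) (-(star (A *ᵥ ξ) ⬝ᵥ (B *ᵥ η)))
    have h3 := abs_dot_le ξ η
    have h4 := abs_dot_le (A *ᵥ ξ) (B *ᵥ η)
    linarith
  have hsX : (0 : ℝ) ≤ en ξ * en η := mul_nonneg (en_nonneg _) (en_nonneg _)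
  have hprod : en (A *ᵥ ξ) * en (B *ᵥ η) ≤ (t * u) * (en ξ * en η) := by
    have := mul_le_mul hAb hBb (en_nonneg _) (mul_nonneg ht (en_nonneg _))
    linarith [this]
  have habs2 : |z.re| ≤ (1 + t * u) * (en ξ * en η) := by linarith
  have hrez : -((1 + t * u) * (en ξ * en η)) ≤ z.re := (abs_le.mp habs2).1
  have h7 : -((Real.sqrt (1 - t ^ 2) * Real.sqrt (1 - u ^ 2)) * (en ξ * en η)) ≤ c * z.re := by
    have step1 := mul_le_mul_of_nonneg_left hrez hc
    have step2 := mul_le_mul_of_nonneg_right hcle hsX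
    linarith [step1, step2]
  have hs1 : Real.sqrt (1 - t ^ 2) ^ 2 = 1 - t ^ 2 := Real.sq_sqrt (by nlinarith)
  have hs2 : Real.sqrt (1 - u ^ 2) ^ 2 = 1 - u ^ 2 := Real.sq_sqrt (by nlinarith)
  have e1 : Real.sqrt (1 - t ^ 2) ^ 2 * (en ξ) ^ 2 = (1 - t ^ 2) * (en ξ) ^ 2 := by rw [hs1]
  have e2 : Real.sqrt (1 - u ^ 2) ^ 2 * (en η) ^ 2 = (1 - u ^ 2) * (en η) ^ 2 := by rw [hs2]
  have f1sq : (en (A *ᵥ ξ)) ^ 2 ≤ t ^ 2 * (en ξ) ^ 2 := by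
    nlinarith [en_nonneg (A *ᵥ ξ), hAb]
  have f2sq : (en (B *ᵥ η)) ^ 2 ≤ u ^ 2 * (en η) ^ 2 := by
    nlinarith [en_nonneg (B *ᵥ η), hBb]
  linarith [h7, f1sq, f2sq, e1, e2,
    sq_nonneg (Real.sqrt (1 - t ^ 2) * en ξ - Real.sqrt (1 - u ^ 2) * en η)]

end Kmat

section Char

/-- The matrix Möbius transform appearing in `dDelta`. -/
def mob (B A : Matrix m n ℂ) : Matrix m n ℂ :=
  (msqrt (1 - B * Bᴴ))⁻¹ * ((A - B) * ((1 - Bᴴ * A)⁻¹ * msqrt (1 - Bᴴ * B)))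

lemma norm_mul_lt_one {A B : Matrix m n ℂ} (hA : ‖A‖ < 1) (hB : ‖B‖ < 1) :
    ‖Bᴴ * A‖ < 1 := by
  have h1 : ‖Bᴴ * A‖ ≤ ‖Bᴴ‖ * ‖A‖ := Matrix.l2_opNorm_mul Bᴴ A
  rw [Matrix.l2_opNorm_conjTranspose] at h1
  nlinarith [norm_nonneg A, norm_nonneg B]

lemma char (A B : Matrix m n ℂ) (hA : ‖A‖ < 1) (hB : ‖B‖ < 1) {t : ℝ}
    (ht0 : 0 ≤ t) (ht1 : t ≤ 1) :
    ‖mob B A‖ ≤ t ↔ (Kmat A B (Real.sqrt (1 - t ^ 2))).PosSemidef := by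
  set P : Matrix m m ℂ := 1 - B * Bᴴ with hPdef
  set Q : Matrix n n ℂ := 1 - Bᴴ * B with hQdef
  set N : Matrix n n ℂ := 1 - Bᴴ * A with hNdef
  set SP : Matrix m m ℂ := msqrt P with hSPdef
  set SQ : Matrix n n ℂ := msqrt Q with hSQdef
  have hmob : mob B A = SP⁻¹ * ((A - B) * (N⁻¹ * SQ)) := rfl
  set M : Matrix m n ℂ := SP⁻¹ * ((A - B) * (N⁻¹ * SQ)) with hMdef
  set W : Matrix n n ℂ := SQ⁻¹ * N with hWdef
  have hQpd : Q.PosDef := posDef_one_sub B hB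
  have hPpd : P.PosDef := posDef_one_sub' B hB
  have hQu : IsUnit Q.det := (Matrix.isUnit_iff_isUnit_det Q).mp hQpd.isUnit
  have hSPu : IsUnit SP.det := msqrt_det_isUnit hPpd
  have hSQu : IsUnit SQ.det := msqrt_det_isUnit hQpd
  have hNu : IsUnit N.det := isUnit_det_one_sub (norm_mul_lt_one hA hB)
  have hWu : IsUnit W.det := by
    rw [hWdef, Matrix.det_mul]
    exact (Matrix.isUnit_nonsing_inv_det SQ hSQu).mul hNu
  have hSPinvH : (SP⁻¹)ᴴ = SP⁻¹ := msqrt_inv_herm hPpd.posSemidef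
  have hSQinvH : (SQ⁻¹)ᴴ = SQ⁻¹ := msqrt_inv_herm hQpd.posSemidef
  have hNH : Nᴴ = 1 - Aᴴ * B := by
    rw [hNdef, Matrix.conjTranspose_sub, Matrix.conjTranspose_mul,
      Matrix.conjTranspose_conjTranspose, Matrix.conjTranspose_one]
  have hMW : M * W = SP⁻¹ * (A - B) := by
    rw [hMdef, hWdef]
    have e : SP⁻¹ * ((A - B) * (N⁻¹ * SQ)) * (SQ⁻¹ * N)
        = SP⁻¹ * ((A - B) * (N⁻¹ * ((SQ * SQ⁻¹) * N))) := by
      simp only [Matrix.mul_assoc]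
    rw [e, Matrix.mul_nonsing_inv _ hSQu, Matrix.one_mul, Matrix.nonsing_inv_mul _ hNu,
      Matrix.mul_one]
  have hWMM : Wᴴ * (Mᴴ * M) * W = (Aᴴ - Bᴴ) * P⁻¹ * (A - B) := by
    have e : Wᴴ * (Mᴴ * M) * W = (M * W)ᴴ * (M * W) := by
      rw [Matrix.conjTranspose_mul M W]
      simp only [Matrix.mul_assoc]
    rw [e, hMW, Matrix.conjTranspose_mul, hSPinvH, Matrix.conjTranspose_sub]
    calc (Aᴴ - Bᴴ) * SP⁻¹ * (SP⁻¹ * (A - B))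
        = (Aᴴ - Bᴴ) * (SP⁻¹ * SP⁻¹) * (A - B) := by simp only [Matrix.mul_assoc]
      _ = (Aᴴ - Bᴴ) * P⁻¹ * (A - B) := by rw [msqrt_inv_mul_inv hPpd.posSemidef]
  have hWW : Wᴴ * W = Nᴴ * Q⁻¹ * N := by
    rw [hWdef, Matrix.conjTranspose_mul, hSQinvH]
    calc Nᴴ * SQ⁻¹ * (SQ⁻¹ * N) = Nᴴ * (SQ⁻¹ * SQ⁻¹) * N := by simp only [Matrix.mul_assoc]
      _ = Nᴴ * Q⁻¹ * N := by rw [msqrt_inv_mul_inv hQpd.posSemidef]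
  have hstar : Nᴴ * Q⁻¹ * N - (Aᴴ - Bᴴ) * P⁻¹ * (A - B) = 1 - Aᴴ * A := by
    rw [hNH, hNdef, hQdef, hPdef]
    exact star_pol A A B hB
  have hconj : Wᴴ * (((t : ℂ) ^ 2) • 1 - Mᴴ * M) * W
      = (1 - Aᴴ * A) - (((1 - t ^ 2 : ℝ)) : ℂ) • (Nᴴ * Q⁻¹ * N) := by
    have e : Wᴴ * (((t : ℂ) ^ 2) • 1 - Mᴴ * M) * W
        = ((t : ℂ) ^ 2) • (Wᴴ * W) - Wᴴ * (Mᴴ * M) * W := by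
      rw [Matrix.mul_sub, Matrix.sub_mul, Matrix.mul_smul, Matrix.smul_mul, Matrix.mul_one]
    rw [e, hWW, hWMM]
    have e2 : (Aᴴ - Bᴴ) * P⁻¹ * (A - B) = Nᴴ * Q⁻¹ * N - (1 - Aᴴ * A) := by
      rw [← hstar]; abel
    rw [e2]
    push_cast
    module
  have hc2 : Real.sqrt (1 - t ^ 2) * Real.sqrt (1 - t ^ 2) = 1 - t ^ 2 :=
    Real.mul_self_sqrt (by nlinarith)
  set c : ℝ := Real.sqrt (1 - t ^ 2) with hcdef
  have hNHH : ((c : ℂ) • Nᴴ)ᴴ = (c : ℂ) • N := by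
    rw [Matrix.conjTranspose_smul, Matrix.conjTranspose_conjTranspose, Complex.star_def,
      Complex.conj_ofReal]
  have hKform : Kmat A B c = Matrix.fromBlocks (1 - Aᴴ * A) ((c : ℂ) • Nᴴ)
      (((c : ℂ) • Nᴴ)ᴴ) Q := by
    rw [hNHH]
    unfold Kmat
    rw [hNH, hNdef, hQdef]
  have hcc : ((c : ℂ) • Nᴴ) * Q⁻¹ * (((c : ℂ) • Nᴴ)ᴴ)
      = (((1 - t ^ 2 : ℝ)) : ℂ) • (Nᴴ * Q⁻¹ * N) := by
    rw [hNHH, Matrix.smul_mul, Matrix.smul_mul, Matrix.mul_smul, smul_smul,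
      ← Complex.ofReal_mul, hc2]
  letI := Q.invertibleOfIsUnitDet hQu
  rw [hmob]
  constructor
  · intro h
    have h1 := ((psd_iff_norm_le M ht0).mpr h).conjTranspose_mul_mul_same W
    rw [hconj] at h1
    rw [hKform, Matrix.PosDef.fromBlocks₂₂ _ _ hQpd, hcc]
    exact h1
  · intro hK
    rw [hKform, Matrix.PosDef.fromBlocks₂₂ _ _ hQpd, hcc] at hK
    have h2 : (Wᴴ * (((t : ℂ) ^ 2) • 1 - Mᴴ * M) * W).PosSemidef := by
      rw [hconj]; exact hK
    exact (psd_iff_norm_le M ht0).mp ((psd_conj_iff hWu).mp h2)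

end Char

section Final

lemma mob_le_bound (A B : Matrix m n ℂ) (hA : ‖A‖ < 1) (hB : ‖B‖ < 1) :
    ‖mob B A‖ ≤ (‖A‖ + ‖B‖) / (1 + ‖A‖ * ‖B‖) := by
  set t := ‖A‖ with htdef
  set u := ‖B‖ with hudef
  have ht : 0 ≤ t := norm_nonneg _
  have hu : 0 ≤ u := norm_nonneg _
  have h1tu : (0 : ℝ) < 1 + t * u := by nlinarith
  set v := (t + u) / (1 + t * u) with hvdef
  have hv0 : 0 ≤ v := div_nonneg (by linarith) h1tu.le
  have hv1 : v < 1 := by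
    rw [hvdef, div_lt_one h1tu]; nlinarith
  have hv2 : (1 : ℝ) - v ^ 2 ≥ 0 := by nlinarith
  refine (char A B hA hB hv0 hv1.le).mpr ?_
  refine Kmat_psd A B (le_refl t) (le_refl u) ht hA.le hu hB.le (Real.sqrt_nonneg _) ?_
  have hsq : (1 - v ^ 2) * (1 + t * u) ^ 2 = (1 - t ^ 2) * (1 - u ^ 2) := by
    rw [hvdef]
    field_simp
    ring
  calc Real.sqrt (1 - v ^ 2) * (1 + t * u)
      = Real.sqrt (1 - v ^ 2) * Real.sqrt ((1 + t * u) ^ 2) := by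
        rw [Real.sqrt_sq h1tu.le]
    _ = Real.sqrt ((1 - v ^ 2) * (1 + t * u) ^ 2) := (Real.sqrt_mul hv2 _).symm
    _ = Real.sqrt ((1 - t ^ 2) * (1 - u ^ 2)) := by rw [hsq]
    _ = Real.sqrt (1 - t ^ 2) * Real.sqrt (1 - u ^ 2) := Real.sqrt_mul (by nlinarith) _
    _ ≤ Real.sqrt (1 - t ^ 2) * Real.sqrt (1 - u ^ 2) := le_refl _

lemma mob_lt_one (A B : Matrix m n ℂ) (hA : ‖A‖ < 1) (hB : ‖B‖ < 1) : ‖mob B A‖ < 1 := by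
  have h := mob_le_bound A B hA hB
  have ht : 0 ≤ ‖A‖ := norm_nonneg _
  have hu : 0 ≤ ‖B‖ := norm_nonneg _
  have h1tu : (0 : ℝ) < 1 + ‖A‖ * ‖B‖ := by nlinarith
  have : (‖A‖ + ‖B‖) / (1 + ‖A‖ * ‖B‖) < 1 := by
    rw [div_lt_one h1tu]; nlinarith
  linarith

lemma mob_symm (A B : Matrix m n ℂ) (hA : ‖A‖ < 1) (hB : ‖B‖ < 1) :
    ‖mob B A‖ = ‖mob A B‖ := by
  have le1 : ‖mob B A‖ ≤ ‖mob A B‖ :=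
    (char A B hA hB (norm_nonneg _) (mob_lt_one B A hB hA).le).mpr
      (Kmat_swap ((char B A hB hA (norm_nonneg _) (mob_lt_one B A hB hA).le).mp (le_refl _)))
  have le2 : ‖mob A B‖ ≤ ‖mob B A‖ :=
    (char B A hB hA (norm_nonneg _) (mob_lt_one A B hA hB).le).mpr
      (Kmat_swap ((char A B hA hB (norm_nonneg _) (mob_lt_one A B hA hB).le).mp (le_refl _)))
  exact le_antisymm le1 le2

/-- The key invariance identity: conjugating the Pick-kernel entry of the images under the
Möbius map recovers the original kernel entry. -/
lemma KID (A C B : Matrix m n ℂ) (hA : ‖A‖ < 1) (hB : ‖B‖ < 1) (hC : ‖C‖ < 1) :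
    ((msqrt (1 - Bᴴ * B))⁻¹ * (1 - Bᴴ * A))ᴴ * (1 - (mob B A)ᴴ * (mob B C))
      * ((msqrt (1 - Bᴴ * B))⁻¹ * (1 - Bᴴ * C)) = 1 - Aᴴ * C := by
  set P : Matrix m m ℂ := 1 - B * Bᴴ with hPdef
  set Q : Matrix n n ℂ := 1 - Bᴴ * B with hQdef
  set NA : Matrix n n ℂ := 1 - Bᴴ * A with hNAdef
  set NC : Matrix n n ℂ := 1 - Bᴴ * C with hNCdef
  set SP : Matrix m m ℂ := msqrt P with hSPdef
  set SQ : Matrix n n ℂ := msqrt Q with hSQdef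
  have hQpd : Q.PosDef := posDef_one_sub B hB
  have hPpd : P.PosDef := posDef_one_sub' B hB
  have hQu : IsUnit Q.det := (Matrix.isUnit_iff_isUnit_det Q).mp hQpd.isUnit
  have hSPu : IsUnit SP.det := msqrt_det_isUnit hPpd
  have hSQu : IsUnit SQ.det := msqrt_det_isUnit hQpd
  have hNAu : IsUnit NA.det := isUnit_det_one_sub (norm_mul_lt_one hA hB)
  have hNCu : IsUnit NC.det := isUnit_det_one_sub (norm_mul_lt_one hC hB)
  have hNAHu : IsUnit (NAᴴ).det := by
    rw [Matrix.det_conjTranspose]; exact hNAu.star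
  have hSPinvH : (SP⁻¹)ᴴ = SP⁻¹ := msqrt_inv_herm hPpd.posSemidef
  have hSQinvH : (SQ⁻¹)ᴴ = SQ⁻¹ := msqrt_inv_herm hQpd.posSemidef
  have hSQH : SQᴴ = SQ := msqrt_herm hQpd.posSemidef
  have hNAH : NAᴴ = 1 - Aᴴ * B := by
    rw [hNAdef, Matrix.conjTranspose_sub, Matrix.conjTranspose_mul,
      Matrix.conjTranspose_conjTranspose, Matrix.conjTranspose_one]
  have hNABu : IsUnit (1 - Aᴴ * B).det := by rw [← hNAH]; exact hNAHu
  have hmobA : mob B A = SP⁻¹ * ((A - B) * (NA⁻¹ * SQ)) := rfl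
  have hmobC : mob B C = SP⁻¹ * ((C - B) * (NC⁻¹ * SQ)) := rfl
  have hXH : (mob B A)ᴴ = SQ * ((1 - Aᴴ * B)⁻¹ * ((Aᴴ - Bᴴ) * SP⁻¹)) := by
    rw [hmobA]
    simp only [Matrix.conjTranspose_mul, hSPinvH, hSQH, Matrix.conjTranspose_nonsing_inv,
      Matrix.conjTranspose_sub, Matrix.conjTranspose_one, Matrix.conjTranspose_conjTranspose,
      Matrix.mul_assoc, hNAdef]
  -- left factor times Xᴴ collapses
  have hGX : (SQ⁻¹ * NA)ᴴ * (mob B A)ᴴ = (Aᴴ - Bᴴ) * SP⁻¹ := by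
    rw [Matrix.conjTranspose_mul, hSQinvH, hXH, hNAH]
    calc (1 - Aᴴ * B) * SQ⁻¹ * (SQ * ((1 - Aᴴ * B)⁻¹ * ((Aᴴ - Bᴴ) * SP⁻¹)))
        = (1 - Aᴴ * B) * (SQ⁻¹ * (SQ * ((1 - Aᴴ * B)⁻¹ * ((Aᴴ - Bᴴ) * SP⁻¹)))) := by
          simp only [Matrix.mul_assoc]
      _ = (1 - Aᴴ * B) * ((1 - Aᴴ * B)⁻¹ * ((Aᴴ - Bᴴ) * SP⁻¹)) := by
          rw [Matrix.nonsing_inv_mul_cancel_left _ _ hSQu]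
      _ = (Aᴴ - Bᴴ) * SP⁻¹ := by rw [Matrix.mul_nonsing_inv_cancel_left _ _ hNABu]
  have hYG : mob B C * (SQ⁻¹ * NC) = SP⁻¹ * (C - B) := by
    rw [hmobC]
    calc SP⁻¹ * ((C - B) * (NC⁻¹ * SQ)) * (SQ⁻¹ * NC)
        = SP⁻¹ * ((C - B) * (NC⁻¹ * (SQ * (SQ⁻¹ * NC)))) := by simp only [Matrix.mul_assoc]
      _ = SP⁻¹ * ((C - B) * (NC⁻¹ * NC)) := by
          rw [Matrix.mul_nonsing_inv_cancel_left _ _ hSQu]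
      _ = SP⁻¹ * (C - B) := by rw [Matrix.nonsing_inv_mul _ hNCu, Matrix.mul_one]
  have hfirst : (SQ⁻¹ * NA)ᴴ * (SQ⁻¹ * NC) = NAᴴ * Q⁻¹ * NC := by
    rw [Matrix.conjTranspose_mul, hSQinvH]
    calc NAᴴ * SQ⁻¹ * (SQ⁻¹ * NC) = NAᴴ * (SQ⁻¹ * SQ⁻¹) * NC := by
          simp only [Matrix.mul_assoc]
      _ = NAᴴ * Q⁻¹ * NC := by rw [msqrt_inv_mul_inv hQpd.posSemidef]
  calc (SQ⁻¹ * NA)ᴴ * (1 - (mob B A)ᴴ * (mob B C)) * (SQ⁻¹ * NC)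
      = (SQ⁻¹ * NA)ᴴ * (SQ⁻¹ * NC)
        - ((SQ⁻¹ * NA)ᴴ * (mob B A)ᴴ) * ((mob B C) * (SQ⁻¹ * NC)) := by
        rw [Matrix.mul_sub, Matrix.mul_one, Matrix.sub_mul]
        simp only [Matrix.mul_assoc]
    _ = NAᴴ * Q⁻¹ * NC - ((Aᴴ - Bᴴ) * SP⁻¹) * (SP⁻¹ * (C - B)) := by
        rw [hfirst, hGX, hYG]
    _ = NAᴴ * Q⁻¹ * NC - (Aᴴ - Bᴴ) * P⁻¹ * (C - B) := by
        congr 1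
        calc (Aᴴ - Bᴴ) * SP⁻¹ * (SP⁻¹ * (C - B))
            = (Aᴴ - Bᴴ) * (SP⁻¹ * SP⁻¹) * (C - B) := by simp only [Matrix.mul_assoc]
          _ = (Aᴴ - Bᴴ) * P⁻¹ * (C - B) := by rw [msqrt_inv_mul_inv hPpd.posSemidef]
    _ = 1 - Aᴴ * C := by
        rw [hNAH, hNCdef, hQdef, hPdef]
        exact star_pol A C B hB

lemma mob_triangle (A B C : Matrix m n ℂ) (hA : ‖A‖ < 1) (hB : ‖B‖ < 1) (hC : ‖C‖ < 1) :
    ‖mob C A‖ ≤ ‖mob B A‖ + ‖mob C B‖ := by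
  set t : ℝ := ‖mob B A‖ with htdef
  set u : ℝ := ‖mob C B‖ with hudef
  have ht0 : 0 ≤ t := norm_nonneg _
  have hu0 : 0 ≤ u := norm_nonneg _
  by_cases hcase : t + u < 1
  · have huY : ‖mob B C‖ = u := (mob_symm B C hB hC).symm
    have ht1 : t ≤ 1 := by linarith
    have hu1 : u ≤ 1 := by linarith
    have hcle : Real.sqrt (1 - (t + u) ^ 2) * (1 + t * u)
        ≤ Real.sqrt (1 - t ^ 2) * Real.sqrt (1 - u ^ 2) := by
      have h1tu : (0:ℝ) ≤ 1 + t * u := by nlinarith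
      have hineq : (1 - (t + u) ^ 2) * (1 + t * u) ^ 2 ≤ (1 - t ^ 2) * (1 - u ^ 2) := by
        nlinarith [sq_nonneg (t + u), mul_nonneg ht0 hu0, sq_nonneg (t * u),
          mul_nonneg (mul_nonneg ht0 hu0) (mul_nonneg ht0 hu0)]
      calc Real.sqrt (1 - (t + u) ^ 2) * (1 + t * u)
          = Real.sqrt (1 - (t + u) ^ 2) * Real.sqrt ((1 + t * u) ^ 2) := by
            rw [Real.sqrt_sq h1tu]
        _ = Real.sqrt ((1 - (t + u) ^ 2) * (1 + t * u) ^ 2) := by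
            rw [Real.sqrt_mul (by nlinarith)]
        _ ≤ Real.sqrt ((1 - t ^ 2) * (1 - u ^ 2)) := Real.sqrt_le_sqrt hineq
        _ = Real.sqrt (1 - t ^ 2) * Real.sqrt (1 - u ^ 2) := Real.sqrt_mul (by nlinarith) _
    have hKXY : (Kmat (mob B A) (mob B C) (Real.sqrt (1 - (t + u) ^ 2))).PosSemidef :=
      Kmat_psd (mob B A) (mob B C) (le_refl t) (le_of_eq huY) ht0 ht1 hu0 hu1
        (Real.sqrt_nonneg _) hcle
    set c : ℝ := Real.sqrt (1 - (t + u) ^ 2) with hcdef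
    set GA : Matrix n n ℂ := (msqrt (1 - Bᴴ * B))⁻¹ * (1 - Bᴴ * A) with hGAdef
    set GC : Matrix n n ℂ := (msqrt (1 - Bᴴ * B))⁻¹ * (1 - Bᴴ * C) with hGCdef
    have hK : (Kmat A C c).PosSemidef := by
      have h2 := hKXY.conjTranspose_mul_mul_same (Matrix.fromBlocks GA 0 0 GC)
      have e : (Matrix.fromBlocks GA 0 0 GC)ᴴ
          * Kmat (mob B A) (mob B C) c * Matrix.fromBlocks GA 0 0 GC = Kmat A C c := by
        rw [Matrix.fromBlocks_conjTranspose, Matrix.conjTranspose_zero]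
        unfold Kmat
        rw [Matrix.fromBlocks_multiply, Matrix.fromBlocks_multiply]
        simp only [Matrix.zero_mul, Matrix.mul_zero, smul_zero, add_zero, zero_add,
          Matrix.smul_mul, Matrix.mul_smul, Matrix.mul_assoc]
        have kidAA := KID A A B hA hB hA
        have kidAC := KID A C B hA hB hC
        have kidCA := KID C A B hC hB hA
        have kidCC := KID C C B hC hB hC
        simp only [Matrix.mul_assoc, ← hGAdef, ← hGCdef] at kidAA kidAC kidCA kidCC
        rw [kidAA, kidAC, kidCA, kidCC]
      rwa [e] at h2
    have := (char A C hA hC (by linarith) hcase.le).mpr hK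
    linarith
  · have h1 := mob_lt_one A C hA hC
    push_neg at hcase
    linarith

end Final

end DDeltaAux


/-- `d_Δ` is a pseudo-distance on `B_Δ` (remark after Proposition 5.1). -/
theorem dDelta_pseudoDist {d s r : ℕ} (E : Set (Fin d → ℂ)) (hEopen : IsOpen E)
    (Δ : (Fin d → ℂ) → Matrix (Fin s) (Fin r) ℂ)
    (hΔ : ∀ p q, DifferentiableOn ℂ (fun ζ => Δ ζ p q) E)
    (hconn : IsConnected (BDelta E Δ)) (hopen : IsOpen (BDelta E Δ))
    (z₁ z₂ z₃ : Fin d → ℂ)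
    (h₁ : z₁ ∈ BDelta E Δ) (h₂ : z₂ ∈ BDelta E Δ) (h₃ : z₃ ∈ BDelta E Δ) :
    dDelta Δ z₁ z₁ = 0 ∧ dDelta Δ z₁ z₂ = dDelta Δ z₂ z₁ ∧
      dDelta Δ z₁ z₃ ≤ dDelta Δ z₁ z₂ + dDelta Δ z₂ z₃ := by
  obtain ⟨-, h1n⟩ := h₁
  obtain ⟨-, h2n⟩ := h₂
  obtain ⟨-, h3n⟩ := h₃
  refine ⟨?_, ?_, ?_⟩
  · simp [dDelta, sub_self, Matrix.zero_mul, Matrix.mul_zero]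
  · exact DDeltaAux.mob_symm (Δ z₁) (Δ z₂) h1n h2n
  · exact DDeltaAux.mob_triangle (Δ z₁) (Δ z₂) (Δ z₃) h1n h2n h3n
end
end

section
/- (Remark 3.2(1): the conjugation function lies in S_{2,gen}(𝔻).) Let T be a 2×2 complex matrix with ‖T‖ ≤ 1 that is diagonalizable with two distinct eigenvalues z, w ∈ 𝔻 and corresponding eigenvectors v_1, v_2 forming a basis of ℂ^2. Then the 2×2 matrix S determined by S v_1 = conj(z) v_1 and S v_2 = conj(w) v_2 satisfies ‖S‖ ≤ 1. (Hence the non-holomorphic function z ↦ conj(z) belongs to S_{2,gen}(𝔻), so S_2(𝔻) ≠ S_{2,gen}(𝔻).) -/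
open scoped Matrix.Norms.L2Operator ComplexOrder
open Matrix

noncomputable section

/-- **Remark 3.2(1)**: the conjugation function lies in `S_{2,gen}(𝔻)`. -/
theorem conj_mem_S2gen_disk (T S : Matrix (Fin 2) (Fin 2) ℂ) (v : Fin 2 → Fin 2 → ℂ)
    (z w : ℂ) (hT : ‖T‖ ≤ 1) (hv : LinearIndependent ℂ v) (hzw : z ≠ w)
    (hz : ‖z‖ < 1) (hw : ‖w‖ < 1)
    (h₀ : T *ᵥ v 0 = z • v 0) (h₁ : T *ᵥ v 1 = w • v 1)
    (hS₀ : S *ᵥ v 0 = (starRingEnd ℂ) z • v 0)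
    (hS₁ : S *ᵥ v 1 = (starRingEnd ℂ) w • v 1) :
    ‖S‖ ≤ 1 := by
  classical
  set cj := starRingEnd ℂ
  set G : ℂ := ∑ i, v 0 i * cj (v 1 i) with hG
  set A : ℝ := ∑ i, Complex.normSq (v 0 i) with hA
  set B : ℝ := ∑ i, Complex.normSq (v 1 i) with hB
  set F : ℂ → ℂ → ℝ := fun a b => ∑ i, Complex.normSq (a * v 0 i + b * v 1 i) with hFdef
  have hExp : ∀ a b : ℂ, F a b
      = Complex.normSq a * A + Complex.normSq b * B + 2 * (a * cj b * G).re := by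
    intro a b
    simp only [hFdef, hG, hA, hB, cj, Fin.sum_univ_two, Complex.normSq_apply, Complex.add_re,
      Complex.add_im, Complex.mul_re, Complex.mul_im, Complex.conj_re, Complex.conj_im]
    ring
  -- norms on EuclideanSpace
  have hnorm : ∀ y : Fin 2 → ℂ,
      ‖(EuclideanSpace.equiv (Fin 2) ℂ).symm y‖ = Real.sqrt (∑ i, Complex.normSq (y i)) := by
    intro y
    rw [EuclideanSpace.norm_eq]
    congr 1
    refine Finset.sum_congr rfl fun i _ => ?_
    simp [Complex.sq_norm]
  have hFnonneg : ∀ a b : ℂ, 0 ≤ F a b :=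
    fun a b => Finset.sum_nonneg fun i _ => Complex.normSq_nonneg _
  -- linear action on combinations
  have hcomb : ∀ (a b : ℂ) (i : Fin 2), (a • v 0 + b • v 1) i = a * v 0 i + b * v 1 i := by
    intro a b i; simp
  -- step 1 : contractivity of T gives F (a*z) (b*w) ≤ F a b
  have hFT : ∀ a b : ℂ, F (a * z) (b * w) ≤ F a b := by
    intro a b
    have hmul : T *ᵥ (a • v 0 + b • v 1) = (a * z) • v 0 + (b * w) • v 1 := by
      rw [mulVec_add, mulVec_smul, mulVec_smul, h₀, h₁, smul_smul, smul_smul]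
    have hle := T.l2_opNorm_mulVec ((EuclideanSpace.equiv (Fin 2) ℂ).symm (a • v 0 + b • v 1))
    have hTx : (T *ᵥ ((EuclideanSpace.equiv (Fin 2) ℂ).symm (a • v 0 + b • v 1)) : Fin 2 → ℂ)
        = (a * z) • v 0 + (b * w) • v 1 := hmul
    rw [hTx, hnorm, hnorm] at hle
    have hle2 : Real.sqrt (∑ i, Complex.normSq (((a * z) • v 0 + (b * w) • v 1) i))
        ≤ Real.sqrt (∑ i, Complex.normSq ((a • v 0 + b • v 1) i)) := by
      calc Real.sqrt (∑ i, Complex.normSq (((a * z) • v 0 + (b * w) • v 1) i))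
          ≤ ‖T‖ * Real.sqrt (∑ i, Complex.normSq ((a • v 0 + b • v 1) i)) := hle
        _ ≤ 1 * Real.sqrt (∑ i, Complex.normSq ((a • v 0 + b • v 1) i)) := by
            apply mul_le_mul_of_nonneg_right hT (Real.sqrt_nonneg _)
        _ = _ := one_mul _
    have e1 : (∑ i, Complex.normSq (((a * z) • v 0 + (b * w) • v 1) i)) = F (a * z) (b * w) := by
      refine Finset.sum_congr rfl fun i _ => ?_; rw [hcomb]
    have e2 : (∑ i, Complex.normSq ((a • v 0 + b • v 1) i)) = F a b := by
      refine Finset.sum_congr rfl fun i _ => ?_; rw [hcomb]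
    rw [e1, e2] at hle2
    have hsq := mul_self_le_mul_self (Real.sqrt_nonneg _) hle2
    rw [Real.mul_self_sqrt (hFnonneg (a * z) (b * w)), Real.mul_self_sqrt (hFnonneg a b)] at hsq
    exact hsq
  -- step 2 : the rotation trick
  have hu : (1 : ℂ) - cj z * w ≠ 0 := by
    intro h
    have : cj z * w = 1 := by linear_combination -h
    have h1 : ‖cj z * w‖ = 1 := by rw [this]; simp
    rw [norm_mul] at h1
    have hzz : ‖cj z‖ = ‖z‖ := by simp [cj]
    rw [hzz] at h1
    nlinarith [norm_nonneg z, norm_nonneg w]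
  have hcu : (1 : ℂ) - z * cj w ≠ 0 := by
    intro h
    apply hu
    have := congrArg cj h
    simpa [cj, _root_.map_sub, _root_.map_mul] using this
  set μ : ℂ := (1 - z * cj w) / (1 - cj z * w) with hμdef
  have hμ1 : Complex.normSq μ = 1 := by
    rw [hμdef, Complex.normSq_div]
    have : (1 : ℂ) - z * cj w = cj (1 - cj z * w) := by
      simp [cj, _root_.map_sub, _root_.map_mul]
    rw [this, Complex.normSq_conj, div_self]
    exact fun h => hu (Complex.normSq_eq_zero.mp h)
  have hkeyc : cj μ * (1 - z * cj w) = 1 - cj z * w := by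
    have hμc : cj μ = (1 - cj z * w) / (1 - z * cj w) := by
      rw [hμdef]; simp [cj, map_div₀, _root_.map_sub, _root_.map_mul]
    rw [hμc, div_mul_cancel₀ _ hcu]
  have key : ∀ a b : ℂ, F (a * cj z) (b * cj w) ≤ F a b := by
    intro a b
    have h1 := hFT a (μ * b)
    simp only [hExp] at h1 ⊢
    have na : Complex.normSq (a * cj z) = Complex.normSq (a * z) := by
      simp [Complex.normSq_mul, cj]
    have nb : Complex.normSq (μ * b) = Complex.normSq b := by
      simp [Complex.normSq_mul, hμ1]
    have nw : Complex.normSq (b * cj w) = Complex.normSq (μ * b * w) := by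
      rw [Complex.normSq_mul, Complex.normSq_mul, Complex.normSq_mul, hμ1,
        Complex.normSq_conj (z := w)]
      ring
    have cross : a * cj b * G - a * cj z * cj (b * cj w) * G
        = a * cj (μ * b) * G - a * z * cj (μ * b * w) * G := by
      simp only [cj, _root_.map_mul, Complex.conj_conj]
      have h2 : (starRingEnd ℂ) μ * (1 - z * (starRingEnd ℂ) w) = 1 - (starRingEnd ℂ) z * w :=
        hkeyc
      linear_combination (-(a * (starRingEnd ℂ) b * G)) * h2
    have crossre := congrArg Complex.re cross
    simp only [Complex.sub_re] at crossre
    rw [na, nw]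
    rw [nb] at h1
    linarith [h1, crossre]
  -- step 3 : conclude
  rw [Matrix.l2_opNorm_def]
  refine ContinuousLinearMap.opNorm_le_bound _ zero_le_one ?_
  intro x
  set y : Fin 2 → ℂ := (EuclideanSpace.equiv (Fin 2) ℂ) x with hy
  have hcard : Fintype.card (Fin 2) = Module.finrank ℂ (Fin 2 → ℂ) := by simp
  let Bv := basisOfLinearIndependentOfCardEqFinrank hv hcard
  obtain ⟨a, b, hab⟩ : ∃ a b : ℂ, y = a • v 0 + b • v 1 := by
    refine ⟨Bv.repr y 0, Bv.repr y 1, ?_⟩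
    have := Bv.sum_repr y
    rw [Fin.sum_univ_two] at this
    simp only [Bv, coe_basisOfLinearIndependentOfCardEqFinrank] at this
    exact this.symm
  have hSx : (S *ᵥ x : Fin 2 → ℂ) = (a * cj z) • v 0 + (b * cj w) • v 1 := by
    show S *ᵥ y = _
    rw [hab, mulVec_add, mulVec_smul, mulVec_smul, hS₀, hS₁, smul_smul, smul_smul]
  have hlhs : ‖(EuclideanSpace.equiv (Fin 2) ℂ).symm (S *ᵥ x)‖
      = Real.sqrt (F (a * cj z) (b * cj w)) := by
    rw [hnorm, hSx]
    exact congrArg Real.sqrt (Finset.sum_congr rfl fun i _ => by rw [hcomb])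
  have hrhs : ‖x‖ = Real.sqrt (F a b) := by
    have hxy : x = (EuclideanSpace.equiv (Fin 2) ℂ).symm y := rfl
    rw [hxy, hnorm, hab]
    exact congrArg Real.sqrt (Finset.sum_congr rfl fun i _ => by rw [hcomb])
  calc ‖(EuclideanSpace.equiv (Fin 2) ℂ).symm (S *ᵥ x)‖
      = Real.sqrt (F (a * cj z) (b * cj w)) := hlhs
    _ ≤ Real.sqrt (F a b) := Real.sqrt_le_sqrt (key a b)
    _ = 1 * ‖x‖ := by rw [hrhs, one_mul]
end
end
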